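/- The optimal value function u satisfies liminf_{t→∞} u(t)/√t ≥ √2. -/

import Mathlib

open Set Filter


/-- The operator `J` from the paper: `(Jf)(t) = ∫₀¹ (f(t(1−x)) + 1 − f(t))⁺ dx`. -/
noncomputable def Jop (f : ℝ → ℝ) (t : ℝ) : ℝ :=
  ∫ x in (0 : ℝ)..1, max (f (t * (1 - x)) + 1 - f t) 0

set_option maxHeartbeats 1000000 in
/-- The optimal value function `u` (the C¹ solution of `u′ = Ju`, `u(0) = 0`)
satisfies `liminf_{t→∞} u(t)/√t ≥ √2`, i.e. for every `ε > 0`, eventually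
`u(t)/√t ≥ √2 − ε`. -/
theorem statement3 (u u' : ℝ → ℝ)
    (hderiv : ∀ t ∈ Set.Ici (0 : ℝ), HasDerivWithinAt u (u' t) (Set.Ici (0 : ℝ)) t)
    (hcont : ContinuousOn u' (Set.Ici (0 : ℝ)))
    (hu0 : u 0 = 0)
    (heq : ∀ t ∈ Set.Ici (0 : ℝ), u' t = Jop u t) :
    ∀ ε > (0 : ℝ), ∀ᶠ t in Filter.atTop, Real.sqrt 2 - ε ≤ u t / Real.sqrt t := by
  -- basic facts
  have ucont : ContinuousOn u (Set.Ici (0:ℝ)) :=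
    fun t ht => (hderiv t ht).differentiableWithinAt.continuousWithinAt
  have hJnonneg : ∀ t, 0 ≤ Jop u t := fun t =>
    intervalIntegral.integral_nonneg zero_le_one (fun x _ => le_max_right _ 0)
  have umono : MonotoneOn u (Set.Ici (0:ℝ)) := by
    refine monotoneOn_of_deriv_nonneg (convex_Ici 0) ucont ?_ ?_
    · intro x hx
      rw [interior_Ici] at hx
      exact (((hderiv x (Set.mem_Ici.mpr (le_of_lt hx))).hasDerivAt
        (Ici_mem_nhds hx)).differentiableAt).differentiableWithinAt
    · intro x hx
      rw [interior_Ici] at hx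
      rw [((hderiv x (Set.mem_Ici.mpr (le_of_lt hx))).hasDerivAt (Ici_mem_nhds hx)).deriv, heq x (Set.mem_Ici.mpr (le_of_lt hx))]
      exact hJnonneg x
  have unonneg : ∀ t, 0 ≤ t → 0 ≤ u t := by
    intro t ht
    have h := umono Set.self_mem_Ici (Set.mem_Ici.mpr ht) ht
    linarith only [h, hu0.le, hu0.ge]
  -- key comparison lemma
  have key : ∀ β : ℝ, 0 < β → β^2 < 2 →
      ∃ T : ℝ, 0 < T ∧ ∀ t, T ≤ t → β*(Real.sqrt t - Real.sqrt T) ≤ u t := by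
    intro β hβ0 hβ2
    set δ : ℝ := (4 - 2*β^2)/(2*(4-β^2)) with hδdef
    have hden : (0:ℝ) < 2*(4-β^2) := by linarith only [hβ2]
    have hδ0 : 0 < δ := div_pos (by linarith only [hβ2]) hden
    have hδ1 : δ < 1 := by
      rw [hδdef, div_lt_one hden]; linarith only []
    have hd : δ*(2*(4-β^2)) = 4-2*β^2 := div_mul_cancel₀ _ (ne_of_gt hden)
    have harj : 0 < 4*(1-δ) - β^2*(2-δ) := by linarith only [hd, hβ2]
    have h2δ : (0:ℝ) < 2-δ := by linarith only [hδ1]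
    set a : ℝ := 2/β with hadef
    have ha0 : 0 < a := by positivity
    set T : ℝ := (a/δ)^2 with hTdef
    have hT0 : 0 < T := by positivity
    have hsqrtT : Real.sqrt T = a/δ := Real.sqrt_sq (by positivity)
    refine ⟨T, hT0, ?_⟩
    by_contra hcon
    push_neg at hcon
    obtain ⟨t₁, ht₁T, ht₁⟩ := hcon
    set φ : ℝ → ℝ := fun s => β*(Real.sqrt s - Real.sqrt T) with hφ
    set S : Set ℝ := {t | T ≤ t ∧ u t < φ t} with hSdef
    have hSne : S.Nonempty := ⟨t₁, ht₁T, ht₁⟩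
    have hSbdd : BddBelow S := ⟨T, fun t ht => ht.1⟩
    set t₀ := sInf S with ht₀def
    have ht₀T : T ≤ t₀ := le_csInf hSne (fun t ht => ht.1)
    have ht₀0 : 0 < t₀ := lt_of_lt_of_le hT0 ht₀T
    have hφcont : Continuous φ := by
      rw [hφ]; exact continuous_const.mul (Real.continuous_sqrt.sub continuous_const)
    have hC : IsClosed {t : ℝ | T ≤ t ∧ u t ≤ φ t} := by
      have hEqset : {t : ℝ | T ≤ t ∧ u t ≤ φ t}
          = Set.Ici T ∩ (fun t => u t - φ t) ⁻¹' Set.Iic 0 := by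
        ext t; simp [sub_nonpos]
      rw [hEqset]
      exact ContinuousOn.preimage_isClosed_of_isClosed
        ((ucont.mono (Set.Ici_subset_Ici.mpr hT0.le)).sub hφcont.continuousOn)
        isClosed_Ici isClosed_Iic
    have ht₀clos : t₀ ∈ closure S := csInf_mem_closure hSne hSbdd
    have ht₀le : u t₀ ≤ φ t₀ := by
      have hsub : closure S ⊆ {t : ℝ | T ≤ t ∧ u t ≤ φ t} :=
        closure_minimal (fun t ht => ⟨ht.1, ht.2.le⟩) hC
      exact (hsub ht₀clos).2
    have hge : φ t₀ ≤ u t₀ := by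
      rcases eq_or_lt_of_le ht₀T with h | h
      · have h1 : φ t₀ = 0 := by rw [hφ, ← h]; simp
        rw [h1]; exact unonneg t₀ ht₀0.le
      · have hC2 : IsClosed {t : ℝ | T ≤ t ∧ φ t ≤ u t} := by
          have hEqset : {t : ℝ | T ≤ t ∧ φ t ≤ u t}
              = Set.Ici T ∩ (fun t => φ t - u t) ⁻¹' Set.Iic 0 := by
            ext t; simp [sub_nonpos]
          rw [hEqset]
          exact ContinuousOn.preimage_isClosed_of_isClosed
            (hφcont.continuousOn.sub (ucont.mono (Set.Ici_subset_Ici.mpr hT0.le)))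
            isClosed_Ici isClosed_Iic
        have h1 : Set.Ico T t₀ ⊆ {t : ℝ | T ≤ t ∧ φ t ≤ u t} := by
          intro s hs
          refine ⟨hs.1, ?_⟩
          by_contra hlt
          push_neg at hlt
          exact absurd (csInf_le hSbdd ⟨hs.1, hlt⟩) (not_le.mpr hs.2)
        have h2 : t₀ ∈ closure (Set.Ico T t₀) := by
          rw [closure_Ico (ne_of_lt h)]
          exact Set.right_mem_Icc.mpr h.le
        exact (closure_minimal h1 hC2 h2).2
    have hEq : u t₀ = φ t₀ := le_antisymm ht₀le hge
    have ht₀notS : t₀ ∉ S := fun h => absurd h.2 (not_lt.mpr hge)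
    have hbelow : ∀ s, 0 ≤ s → s ≤ t₀ → φ s ≤ u s := by
      intro s hs0 hst
      rcases lt_or_ge s T with h | h
      · have h1 : Real.sqrt s ≤ Real.sqrt T := Real.sqrt_le_sqrt h.le
        have h2 : φ s ≤ 0 := by
          simp only [hφ]
          exact mul_nonpos_of_nonneg_of_nonpos hβ0.le (by linarith only [h1])
        exact h2.trans (unonneg s hs0)
      · rcases eq_or_lt_of_le hst with he | hlt
        · rw [he]; exact hge
        · by_contra hno
          push_neg at hno
          exact absurd (csInf_le hSbdd ⟨h, hno⟩) (not_le.mpr hlt)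
    -- derivative upper bound at t₀
    set r := Real.sqrt t₀ with hr
    have hr0 : 0 < r := Real.sqrt_pos.mpr ht₀0
    have hψ : HasDerivWithinAt (fun s => u s - φ s) (u' t₀ - β*(1/(2*r))) (Set.Ici 0) t₀ := by
      refine (hderiv t₀ ht₀0.le).sub ?_
      have h1 : HasDerivAt (fun s : ℝ => β*(Real.sqrt s - Real.sqrt T)) (β*(1/(2*r))) t₀ :=
        ((Real.hasDerivAt_sqrt (ne_of_gt ht₀0)).sub_const (Real.sqrt T)).const_mul β
      exact h1.hasDerivWithinAt
    have hdle : u' t₀ ≤ β*(1/(2*r)) := by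
      have hslope := hasDerivWithinAt_iff_tendsto_slope.mp hψ
      have hSsub : S ⊆ Set.Ici (0:ℝ) \ {t₀} := by
        intro t ht
        exact ⟨hT0.le.trans ht.1, fun he => ht₀notS (by rwa [← he])⟩
      haveI hne : (nhdsWithin t₀ S).NeBot := mem_closure_iff_nhdsWithin_neBot.mp ht₀clos
      have h2 : Filter.Tendsto (slope (fun s => u s - φ s) t₀) (nhdsWithin t₀ S)
          (nhds (u' t₀ - β*(1/(2*r)))) := hslope.mono_left (nhdsWithin_mono t₀ hSsub)
      have h3 : u' t₀ - β*(1/(2*r)) ≤ 0 := by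
        refine le_of_tendsto h2 ?_
        filter_upwards [self_mem_nhdsWithin] with t ht
        have htgt : t₀ < t :=
          lt_of_le_of_ne (csInf_le hSbdd ht) (fun he => ht₀notS (by rwa [he]))
        rw [slope_def_field]
        apply div_nonpos_of_nonpos_of_nonneg
        · have h4 : u t < φ t := ht.2
          show u t - φ t - (u t₀ - φ t₀) ≤ 0
          linarith only [h4, hEq]
        · linarith only [htgt]
      linarith only [h3]
    -- derivative lower bound at t₀
    have hrT : a/δ ≤ r := by rw [hr, ← hsqrtT]; exact Real.sqrt_le_sqrt ht₀T
    set c := a/r with hc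
    have hc0 : 0 < c := div_pos ha0 hr0
    have hcδ : c ≤ δ := by
      rw [hc, div_le_iff₀ hr0]
      have h := (div_le_iff₀ hδ0).mp hrT
      linarith only [h]
    have hc1 : c < 1 := lt_of_le_of_lt hcδ hδ1
    set K := β*r/(2-δ) with hK
    set G : ℝ → ℝ := fun x => max (u (t₀ * (1 - x)) + 1 - u t₀) 0 with hG
    have hGcont : ContinuousOn G (Set.Icc 0 1) := by
      rw [hG]
      refine ContinuousOn.sup ?_ continuousOn_const
      refine ContinuousOn.sub (ContinuousOn.add ?_ continuousOn_const) continuousOn_const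
      refine ucont.comp
        ((continuous_const.mul (continuous_const.sub continuous_id)).continuousOn) ?_
      intro x hx
      simp only [Set.mem_Icc] at hx
      exact Set.mem_Ici.mpr (mul_nonneg ht₀0.le (by linarith only [hx.2]))
    have hInt1 : IntervalIntegrable G MeasureTheory.volume 0 c := by
      refine (hGcont.mono ?_).intervalIntegrable
      rw [Set.uIcc_of_le hc0.le]
      exact Set.Icc_subset_Icc le_rfl hc1.le
    have hInt2 : IntervalIntegrable G MeasureTheory.volume c 1 := by
      refine (hGcont.mono ?_).intervalIntegrable
      rw [Set.uIcc_of_le hc1.le]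
      exact Set.Icc_subset_Icc hc0.le le_rfl
    have hsplit : Jop u t₀ = (∫ x in (0:ℝ)..c, G x) + ∫ x in c..(1:ℝ), G x :=
      (intervalIntegral.integral_add_adjacent_intervals hInt1 hInt2).symm
    have hpos2 : 0 ≤ ∫ x in c..(1:ℝ), G x :=
      intervalIntegral.integral_nonneg hc1.le (fun x _ => le_max_right _ 0)
    have hpt : ∀ x ∈ Set.Icc (0:ℝ) c, 1 - K*x ≤ G x := by
      intro x hx
      obtain ⟨hx0, hxc⟩ := hx
      have hxδ : x ≤ δ := hxc.trans hcδ
      rcases le_or_gt (1 - K*x) 0 with h | h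
      · exact h.trans (le_max_right _ 0)
      · refine le_trans ?_ (le_max_left _ 0)
        have hb : φ (t₀*(1-x)) ≤ u (t₀*(1-x)) :=
          hbelow _ (mul_nonneg ht₀0.le (by linarith only [hxδ, hδ1]))
            (mul_le_of_le_one_right ht₀0.le (by linarith only [hx0]))
        set s := Real.sqrt (1-x) with hs
        have hsqrtmul : Real.sqrt (t₀*(1-x)) = r * s := by
          rw [hs, hr]; exact Real.sqrt_mul ht₀0.le _
        have hs0 : 0 ≤ s := Real.sqrt_nonneg _
        have hs2 : s^2 = 1-x := Real.sq_sqrt (by linarith only [hxδ, hδ1])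
        have hsq : (1-δ)^2 ≤ s^2 := by
          rw [hs2]
          nlinarith only [hxδ, mul_nonneg hδ0.le (sub_nonneg.mpr hδ1.le)]
        have hsge : 1-δ ≤ s := by nlinarith only [hsq, hs0]
        have hs1 : s ≤ 1 := by nlinarith only [hs2, hs0, hx0]
        have hkey : (2-δ)*(1-s) ≤ x := by
          nlinarith only [hs2, mul_nonneg (sub_nonneg.mpr hs1)
            (show (0:ℝ) ≤ s - (1-δ) by linarith only [hsge])]
        have hφdiff : φ t₀ - φ (t₀*(1-x)) = β*r*(1-s) := by
          simp only [hφ, hsqrtmul, ← hr]; ring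
        have h5 : u t₀ - u (t₀*(1-x)) ≤ β*r*(1-s) := by linarith only [hb, hEq, hφdiff]
        have h6 : β*r*(1-s) ≤ K*x := by
          rw [hK, div_mul_eq_mul_div, le_div_iff₀ h2δ]
          have hh := mul_nonneg (mul_nonneg hβ0.le hr0.le) (sub_nonneg.mpr hkey)
          linarith only [hh]
        linarith only [h5, h6]
    have hpoly : IntervalIntegrable (fun x => 1 - K*x) MeasureTheory.volume 0 c :=
      ((continuous_const.sub (continuous_const.mul continuous_id)).intervalIntegrable 0 c)
    have hmono : (∫ x in (0:ℝ)..c, (1 - K*x)) ≤ ∫ x in (0:ℝ)..c, G x :=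
      intervalIntegral.integral_mono_on hc0.le hpoly hInt1 hpt
    have hcomp : (∫ x in (0:ℝ)..c, (1 - K*x)) = c - K*c^2/2 := by
      have hcontKx : Continuous (fun x : ℝ => K * x) := continuous_const.mul continuous_id
      rw [intervalIntegral.integral_sub intervalIntegrable_const
        (hcontKx.intervalIntegrable 0 c), intervalIntegral.integral_const_mul,
        integral_id, intervalIntegral.integral_const]
      simp [smul_eq_mul]
      ring
    have hlow : c - K*c^2/2 ≤ u' t₀ := by
      rw [heq t₀ ht₀0.le]
      have hs' : Jop u t₀ = (∫ x in (0:ℝ)..c, G x) + ∫ x in c..(1:ℝ), G x := hsplit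
      linarith only [hmono, hpos2, hcomp, hs']
    have hfin : β*(1/(2*r)) < c - K*c^2/2 := by
      have hc2 : c = 2/(β*r) := by rw [hc, hadef, div_div]
      have hβr : (0:ℝ) < β*r := mul_pos hβ0 hr0
      have e : 2/(β*r) - (β*r/(2-δ))*(2/(β*r))^2/2 = (2*(2-δ)-2)/(β*r*(2-δ)) := by
        field_simp
      rw [hc2, hK, e, mul_one_div, div_lt_div_iff₀ (by linarith only [hr0])
        (mul_pos hβr h2δ)]
      have hh := mul_pos hr0 harj
      nlinarith only [hh]
    linarith only [hdle, hlow, hfin]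
  -- conclude
  intro ε hε
  rcases lt_or_ge ε (Real.sqrt 2) with hε2 | hε2
  · set β := Real.sqrt 2 - ε/2 with hβ
    have hβ0 : 0 < β := by rw [hβ]; linarith only [hε, hε2]
    have hs2 : Real.sqrt 2 ^ 2 = 2 := Real.sq_sqrt (by norm_num)
    have hβ2 : β^2 < 2 := by
      have hlt : β < Real.sqrt 2 := by rw [hβ]; linarith only [hε]
      nlinarith only [hlt, hβ0, hs2, Real.sqrt_nonneg 2]
    obtain ⟨T, hT0, hkey⟩ := key β hβ0 hβ2
    rw [Filter.eventually_atTop]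
    refine ⟨max T ((β*Real.sqrt T/(ε/2))^2 + 1), fun t ht => ?_⟩
    have htT : T ≤ t := le_trans (le_max_left _ _) ht
    have ht0 : 0 < t := lt_of_lt_of_le hT0 htT
    have hst : 0 < Real.sqrt t := Real.sqrt_pos.mpr ht0
    have h1 : β*(Real.sqrt t - Real.sqrt T) ≤ u t := hkey t htT
    have h2 : β*Real.sqrt T ≤ (ε/2)*Real.sqrt t := by
      have h3 : ((β*Real.sqrt T/(ε/2))^2 + 1) ≤ t := le_trans (le_max_right _ _) ht
      have h4 : β*Real.sqrt T/(ε/2) ≤ Real.sqrt t := by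
        calc β*Real.sqrt T/(ε/2) = Real.sqrt ((β*Real.sqrt T/(ε/2))^2) :=
              (Real.sqrt_sq (by positivity)).symm
          _ ≤ Real.sqrt ((β*Real.sqrt T/(ε/2))^2 + 1) :=
              Real.sqrt_le_sqrt (by linarith only [])
          _ ≤ Real.sqrt t := Real.sqrt_le_sqrt h3
      have h5 : (β*Real.sqrt T/(ε/2))*(ε/2) ≤ Real.sqrt t*(ε/2) :=
        mul_le_mul_of_nonneg_right h4 (by linarith only [hε])
      have h6 : (β*Real.sqrt T/(ε/2))*(ε/2) = β*Real.sqrt T := by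
        field_simp
      linarith only [h5, h6]
    rw [le_div_iff₀ hst]
    calc (Real.sqrt 2 - ε)*Real.sqrt t = β*Real.sqrt t - (ε/2)*Real.sqrt t := by
          rw [hβ]; ring
      _ ≤ β*Real.sqrt t - β*Real.sqrt T := by linarith only [h2]
      _ = β*(Real.sqrt t - Real.sqrt T) := by ring
      _ ≤ u t := h1
  · rw [Filter.eventually_atTop]
    refine ⟨1, fun t ht => ?_⟩
    have ht0 : (0:ℝ) < t := by linarith only [ht]
    have hnn := div_nonneg (unonneg t ht0.le) (Real.sqrt_nonneg t)
    linarith only [hnn, hε2]
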